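/- Let Q be a symmetric positive definite n×n real matrix and d ≥ 2 even. Then ∫_{ℝⁿ} exp(-k(yᵀQy)^{d/2}) dy = vol(S^{n-1}) · Γ((n+d)/d) / (k^{n/d} · n · √det(Q)), where vol(S^{n-1}) = 2π^{n/2}/Γ(n/2) and k > 0 is any constant. -/

import Mathlib

open MeasureTheory Matrix

private theorem euclid_int (n d : ℕ) (hn : 1 ≤ n) (hd : 2 ≤ d) (k : ℝ) (hk : 0 < k)
    [Nontrivial (EuclideanSpace ℝ (Fin n))] :
    ∫ x : EuclideanSpace ℝ (Fin n), Real.exp (-(k * ‖x‖ ^ d))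
      = (2 * Real.pi ^ ((n : ℝ) / 2) / Real.Gamma ((n : ℝ) / 2)) *
          Real.Gamma (((n : ℝ) + d) / d) / (k ^ ((n : ℝ) / d) * n) := by
  haveI : Nonempty (Fin n) := ⟨⟨0, hn⟩⟩
  rw [integral_fun_norm_addHaar (volume : Measure (EuclideanSpace ℝ (Fin n)))
    (fun r => Real.exp (-(k * r ^ d)))]
  have hdim : Module.finrank ℝ (EuclideanSpace ℝ (Fin n)) = n := by
    simp [finrank_euclideanSpace]
  rw [hdim, measureReal_def, EuclideanSpace.volume_ball]
  have hd0 : (0:ℝ) < d := by positivity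
  have hn0 : (0:ℝ) < n := by positivity
  have hint : ∫ r in Set.Ioi (0:ℝ), r ^ (n - 1) • Real.exp (-(k * r ^ d))
      = k ^ (-(n:ℝ)/d) * (1/(d:ℝ)) * Real.Gamma ((n:ℝ)/d) := by
    rw [setIntegral_congr_fun measurableSet_Ioi
      (g := fun r : ℝ => r ^ ((n:ℝ) - 1) * Real.exp (-k * r ^ (d:ℝ)))
      (fun r hr => by
        rw [smul_eq_mul, ← Real.rpow_natCast r (n-1), ← Real.rpow_natCast r d,
          Nat.cast_sub hn, Nat.cast_one]
        simp [neg_mul]),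
      integral_rpow_mul_exp_neg_mul_rpow hd0 (by linarith) hk]
    rw [sub_add_cancel]
  rw [hint]
  have hGn2 : 0 < Real.Gamma ((n:ℝ)/2) := Real.Gamma_pos_of_pos (by positivity)
  have hGnd : 0 < Real.Gamma ((n:ℝ)/d) := Real.Gamma_pos_of_pos (by positivity)
  have hGd1 : Real.Gamma (((n:ℝ) + d)/d) = (n:ℝ)/d * Real.Gamma ((n:ℝ)/d) := by
    rw [show ((n:ℝ) + d)/d = (n:ℝ)/d + 1 by field_simp,
      Real.Gamma_add_one (by positivity)]
  have hG21 : Real.Gamma ((n:ℝ)/2 + 1) = (n:ℝ)/2 * Real.Gamma ((n:ℝ)/2) :=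
    Real.Gamma_add_one (by positivity)
  have hsp : Real.sqrt Real.pi ^ n = Real.pi ^ ((n:ℝ)/2) := by
    rw [Real.sqrt_eq_rpow, ← Real.rpow_natCast (Real.pi ^ ((1:ℝ)/2)) n,
      ← Real.rpow_mul Real.pi_pos.le]
    congr 1; ring
  have hkneg : k ^ (-(n:ℝ)/d) = (k ^ ((n:ℝ)/d))⁻¹ := by
    rw [neg_div, Real.rpow_neg hk.le]
  have hk0 : 0 < k ^ ((n:ℝ)/d) := Real.rpow_pos_of_pos hk _
  rw [ENNReal.toReal_mul, ENNReal.toReal_pow, ENNReal.toReal_ofReal (by norm_num),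
    ENNReal.toReal_ofReal (by positivity)]
  simp only [Fintype.card_fin, one_pow, one_mul, nsmul_eq_mul, smul_eq_mul]
  rw [hGd1, hG21, hsp, hkneg]
  field_simp

theorem stmt7 (n d : ℕ) (hn : 1 ≤ n) (hd : 2 ≤ d) (hde : Even d)
    (Q : Matrix (Fin n) (Fin n) ℝ) (hQ : Q.PosDef) (k : ℝ) (hk : 0 < k) :
    ∫ y : Fin n → ℝ, Real.exp (-(k * (y ⬝ᵥ (Q *ᵥ y)) ^ (d / 2)))
      = (2 * Real.pi ^ ((n : ℝ) / 2) / Real.Gamma ((n : ℝ) / 2)) *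
          Real.Gamma (((n : ℝ) + d) / d) /
          (k ^ ((n : ℝ) / d) * n * Real.sqrt Q.det) := by
  haveI : Nonempty (Fin n) := ⟨⟨0, hn⟩⟩
  haveI : Nontrivial (EuclideanSpace ℝ (Fin n)) := by
    refine ⟨0, EuclideanSpace.single ⟨0, hn⟩ 1, fun h => ?_⟩
    have := congrArg (fun v => v ⟨0, hn⟩) h.symm
    simp [EuclideanSpace.single_apply] at this
  set S := (open MatrixOrder in CFC.sqrt Q) with hSdef
  have hSherm : S.IsHermitian := (open MatrixOrder in (CFC.sqrt_nonneg Q).posSemidef).1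
  have hSS : S * S = Q := open MatrixOrder in CFC.sqrt_mul_sqrt_self Q hQ.posSemidef.nonneg
  have hSnn : 0 ≤ S.det := by
    rw [hSherm.det_eq_prod_eigenvalues]
    exact Finset.prod_nonneg fun i _ =>
      (open MatrixOrder in (CFC.sqrt_nonneg Q).posSemidef).eigenvalues_nonneg i
  have hdetQ : 0 < Q.det := hQ.det_pos
  have hdet2 : S.det * S.det = Q.det := by rw [← Matrix.det_mul, hSS]
  have hSpos : 0 < S.det := by nlinarith
  have hsqrtQ : Real.sqrt Q.det = S.det := by
    rw [← hdet2, Real.sqrt_mul_self hSnn]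
  have hST : Sᵀ = S := by
    rw [← Matrix.conjTranspose_eq_transpose_of_trivial]; exact hSherm
  have hquad : ∀ y : Fin n → ℝ, y ⬝ᵥ Q *ᵥ y = (S *ᵥ y) ⬝ᵥ (S *ᵥ y) := by
    intro y
    rw [← hSS, ← Matrix.mulVec_mulVec, Matrix.dotProduct_mulVec,
      ← Matrix.mulVec_transpose, hST]
  set f : (Fin n → ℝ) → ℝ := fun x => Real.exp (-(k * (x ⬝ᵥ x) ^ (d / 2)))
    with hfdef
  have hfc : Continuous f := by
    apply Real.continuous_exp.comp
    apply Continuous.neg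
    apply Continuous.mul continuous_const
    apply Continuous.pow
    simp only [dotProduct]
    exact continuous_finset_sum _ fun i _ =>
      (continuous_apply i).mul (continuous_apply i)
  have hmeas : Measurable (Matrix.toLin' S) :=
    (LinearMap.continuous_on_pi _).measurable
  have key : ∫ y : Fin n → ℝ, f (Matrix.toLin' S y) = S.det⁻¹ * ∫ x, f x := by
    rw [← MeasureTheory.integral_map hmeas.aemeasurable
        (hfc.aestronglyMeasurable),
      Real.map_matrix_volume_pi_eq_smul_volume_pi hSpos.ne',
      integral_smul_measure, ENNReal.toReal_ofReal (by positivity),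
      abs_of_pos (by positivity), smul_eq_mul]
  have heq : (fun y : Fin n → ℝ => Real.exp (-(k * (y ⬝ᵥ Q *ᵥ y) ^ (d / 2))))
      = fun y => f (Matrix.toLin' S y) := by
    funext y
    rw [hfdef]
    simp only [Matrix.toLin'_apply]
    rw [hquad y]
  rw [heq, key]
  have htrans : ∫ x : Fin n → ℝ, f x
      = ∫ x : EuclideanSpace ℝ (Fin n), Real.exp (-(k * ‖x‖ ^ d)) := by
    rw [← (EuclideanSpace.volume_preserving_symm_measurableEquiv_toLp (Fin n)).integral_comp
      (MeasurableEquiv.measurableEmbedding _) f]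
    congr 1
    funext x
    rw [hfdef]
    have h1 : (MeasurableEquiv.toLp 2 (Fin n → ℝ)).symm x ⬝ᵥ
        (MeasurableEquiv.toLp 2 (Fin n → ℝ)).symm x = ‖x‖ ^ 2 := by
      rw [EuclideanSpace.norm_eq, Real.sq_sqrt (by positivity)]
      simp [dotProduct, sq]
    simp only [h1]
    rw [← pow_mul, Nat.mul_div_cancel' hde.two_dvd]
  rw [htrans, euclid_int n d hn hd k hk, hsqrtQ]
  have hk0 : 0 < k ^ ((n:ℝ)/d) := Real.rpow_pos_of_pos hk _
  have hn0 : (0:ℝ) < n := by positivity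
  field_simp
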